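/- Let W be a real inner product space, let p ≥ 1, and let f : W → M_p(ℝ) be a linear map into the real p×p matrices such that f(w) is an orthogonal matrix for every unit vector w ∈ W. Then for all u, v ∈ W one has f(u)ᵀ·f(v) + f(v)ᵀ·f(u) = ((2/p)·tr(f(u)ᵀ·f(v)))·I, where I is the p×p identity matrix. -/

import Mathlib

open Matrix

/-- Let `W` be a real inner product space, `p ≥ 1`, and
`f : W → M_p(ℝ)` a linear map such that `f w` is an orthogonal matrix for every
unit vector `w`.  Then for all `u v : W`,
`f(u)ᵀ f(v) + f(v)ᵀ f(u) = ((2/p)·tr(f(u)ᵀ f(v)))·I`. -/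
theorem hopf_polarization_identity
    {W : Type*} [NormedAddCommGroup W] [InnerProductSpace ℝ W]
    (p : ℕ) (hp : 1 ≤ p) (f : W →ₗ[ℝ] Matrix (Fin p) (Fin p) ℝ)
    (horth : ∀ w : W, ‖w‖ = 1 → (f w)ᵀ * f w = 1) (u v : W) :
    (f u)ᵀ * f v + (f v)ᵀ * f u
      = ((2 / (p : ℝ)) * Matrix.trace ((f u)ᵀ * f v)) • (1 : Matrix (Fin p) (Fin p) ℝ) := by
  have key : ∀ w : W, (f w)ᵀ * f w = (‖w‖ ^ 2 : ℝ) • 1 := by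
    intro w
    rcases eq_or_ne w 0 with h | h
    · simp [h]
    · have hn : ‖w‖ ≠ 0 := norm_ne_zero_iff.mpr h
      have hw : w = ‖w‖ • ((‖w‖)⁻¹ • w) := by
        rw [smul_smul, mul_inv_cancel₀ hn, one_smul]
      have hu : ‖(‖w‖)⁻¹ • w‖ = 1 := by
        rw [norm_smul]
        simp [abs_of_nonneg (inv_nonneg.mpr (norm_nonneg w)), inv_mul_cancel₀ hn]
      calc (f w)ᵀ * f w = (f (‖w‖ • ((‖w‖)⁻¹ • w)))ᵀ * f (‖w‖ • ((‖w‖)⁻¹ • w)) := by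
            rw [← hw]
        _ = (‖w‖ ^ 2 : ℝ) • ((f ((‖w‖)⁻¹ • w))ᵀ * f ((‖w‖)⁻¹ • w)) := by
            rw [_root_.map_smul, transpose_smul, smul_mul_assoc, mul_smul_comm, smul_smul, sq]
        _ = (‖w‖ ^ 2 : ℝ) • 1 := by rw [horth _ hu]
  have hB : (f u)ᵀ * f v + (f v)ᵀ * f u
      = (2 * (inner ℝ u v : ℝ)) • (1 : Matrix (Fin p) (Fin p) ℝ) := by
    have expand := key (u + v)
    rw [map_add, transpose_add, add_mul, mul_add, mul_add] at expand
    have hnorm : (‖u + v‖ ^ 2 : ℝ) = ‖u‖ ^ 2 + 2 * (inner ℝ u v : ℝ) + ‖v‖ ^ 2 := by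
      rw [← real_inner_self_eq_norm_sq, ← real_inner_self_eq_norm_sq,
        ← real_inner_self_eq_norm_sq]
      rw [inner_add_add_self, real_inner_comm v u]
      ring
    have := expand
    rw [key u, key v, hnorm] at this
    have h2 : (f u)ᵀ * f v + (f v)ᵀ * f u
        = (‖u‖ ^ 2 + 2 * (inner ℝ u v : ℝ) + ‖v‖ ^ 2) • (1 : Matrix (Fin p) (Fin p) ℝ)
          - (‖u‖ ^ 2 : ℝ) • 1 - (‖v‖ ^ 2 : ℝ) • 1 := by
      rw [← this]; abel
    rw [h2, ← sub_smul, ← sub_smul]; ring_nf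
  have htr : Matrix.trace ((f u)ᵀ * f v) = (inner ℝ u v : ℝ) * p := by
    have hsym : Matrix.trace ((f v)ᵀ * f u) = Matrix.trace ((f u)ᵀ * f v) := by
      rw [← Matrix.trace_transpose ((f v)ᵀ * f u), transpose_mul, transpose_transpose]
    have := congrArg Matrix.trace hB
    rw [trace_add, hsym, trace_smul, trace_one] at this
    simp only [Finset.card_univ, Fintype.card_fin, smul_eq_mul] at this
    have : 2 * Matrix.trace ((f u)ᵀ * f v) = 2 * ((inner ℝ u v : ℝ) * p) := by
      rw [two_mul]; linarith [this]
    linarith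
  rw [hB, htr]
  congr 1
  have hp' : (p : ℝ) ≠ 0 := Nat.cast_ne_zero.mpr (by omega)
  field_simp
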